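/- arXiv:2308.13350 — 3 statements merged into one kernel-verified Lean document; each statement's English description precedes it below -/
import Mathlib

section
/- Let f,g:ℂ^n→ℂ be holomorphic polynomial functions. The mixed function F = f·conj(g), viewed as a real map ℝ^{2n}→ℝ², is horizontally weakly conformal if and only if ⟨ conj(df), conj(dg) ⟩_ℂ = 0 identically, where df and dg are the holomorphic gradients of f and g. -/
open scoped RealInnerProductSpace ComplexConjugate

noncomputable section

/-- The model for `ℂ^n ≅ ℝ^{2n}`: a point `w` represents `z = w.1 + i w.2`. -/
abbrev CSpace (n : ℕ) := WithLp 2 (EuclideanSpace ℝ (Fin n) × EuclideanSpace ℝ (Fin n))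

/-- The holomorphic (Wirtinger) gradient `∂f/∂z_j = (∂f/∂x_j - i ∂f/∂y_j)/2`. -/
def wdz {n : ℕ} (f : CSpace n → ℂ) (w : CSpace n) (j : Fin n) : ℂ :=
  (1 / 2 : ℂ) *
    (fderiv ℝ f w ((WithLp.equiv 2 _).symm (EuclideanSpace.single j 1, 0)) -
      Complex.I * fderiv ℝ f w ((WithLp.equiv 2 _).symm (0, EuclideanSpace.single j 1)))

/-- The anti-holomorphic (Wirtinger) gradient `∂f/∂z̄_j = (∂f/∂x_j + i ∂f/∂y_j)/2`. -/
def wdzbar {n : ℕ} (f : CSpace n → ℂ) (w : CSpace n) (j : Fin n) : ℂ :=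
  (1 / 2 : ℂ) *
    (fderiv ℝ f w ((WithLp.equiv 2 _).symm (EuclideanSpace.single j 1, 0)) +
      Complex.I * fderiv ℝ f w ((WithLp.equiv 2 _).symm (0, EuclideanSpace.single j 1)))

open scoped Topology

namespace FgbarAux

variable {n : ℕ}

instance instContinuousSMulCSpace (n : ℕ) : ContinuousSMul ℝ (CSpace n) := IsBoundedSMul.continuousSMul

def uu (n : ℕ) (j : Fin n) : CSpace n := (WithLp.equiv 2 _).symm (EuclideanSpace.single j 1, 0)
def vv (n : ℕ) (j : Fin n) : CSpace n := (WithLp.equiv 2 _).symm (0, EuclideanSpace.single j 1)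

lemma inner_gradient (u : CSpace n → ℝ) (w v : CSpace n) :
    ⟪gradient u w, v⟫ = fderiv ℝ u w v := by
  rw [gradient]
  exact InnerProductSpace.toDual_symm_apply

def onb (n : ℕ) : OrthonormalBasis (Fin n ⊕ Fin n) ℝ (CSpace n) :=
  (EuclideanSpace.basisFun (Fin n) ℝ).prod (EuclideanSpace.basisFun (Fin n) ℝ)

lemma onb_inl (j : Fin n) : onb n (Sum.inl j) = uu n j := by
  simp [onb, uu, OrthonormalBasis.prod_apply, EuclideanSpace.basisFun_apply]

lemma onb_inr (j : Fin n) : onb n (Sum.inr j) = vv n j := by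
  simp [onb, vv, OrthonormalBasis.prod_apply, EuclideanSpace.basisFun_apply]

lemma hwc_point_iff (F : CSpace n → ℂ) (hF : Differentiable ℝ F) (w : CSpace n) :
    (⟪gradient (fun w => (F w).re) w, gradient (fun w => (F w).im) w⟫ = 0 ∧
     ‖gradient (fun w => (F w).re) w‖ = ‖gradient (fun w => (F w).im) w‖) ↔
    ∑ j : Fin n, wdz F w j * wdzbar F w j = 0 := by
  classical
  set D := fderiv ℝ F w with hD
  have hre : ∀ v : CSpace n, fderiv ℝ (fun w => (F w).re) w v = (D v).re := by
    intro v
    have h1 : HasFDerivAt (fun w => (F w).re) (Complex.reCLM.comp D) w :=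
      (Complex.reCLM.hasFDerivAt).comp w (hF w).hasFDerivAt
    rw [h1.fderiv]; rfl
  have him : ∀ v : CSpace n, fderiv ℝ (fun w => (F w).im) w v = (D v).im := by
    intro v
    have h1 : HasFDerivAt (fun w => (F w).im) (Complex.imCLM.comp D) w :=
      (Complex.imCLM.hasFDerivAt).comp w (hF w).hasFDerivAt
    rw [h1.fderiv]; rfl
  set Gr := gradient (fun w => (F w).re) w
  set Gi := gradient (fun w => (F w).im) w
  have hGr : ∀ v, ⟪Gr, v⟫ = (D v).re := fun v => by
    rw [inner_gradient]; exact hre v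
  have hGi : ∀ v, ⟪Gi, v⟫ = (D v).im := fun v => by
    rw [inner_gradient]; exact him v
  set a : Fin n → ℂ := fun j => D (uu n j) with ha
  set b : Fin n → ℂ := fun j => D (vv n j) with hb
  -- Parseval expansions
  have key : ∀ x y : CSpace n,
      ⟪x, y⟫ = ∑ j : Fin n, (⟪x, uu n j⟫ * ⟪uu n j, y⟫) +
        ∑ j : Fin n, (⟪x, vv n j⟫ * ⟪vv n j, y⟫) := by
    intro x y
    rw [← (onb n).sum_inner_mul_inner x y, Fintype.sum_sum_type]
    simp [onb_inl, onb_inr]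
  have hsum : ∑ j : Fin n, wdz F w j * wdzbar F w j
      = (1/4 : ℂ) * ∑ j : Fin n, (a j ^ 2 + b j ^ 2) := by
    rw [Finset.mul_sum]
    refine Finset.sum_congr rfl fun j _ => ?_
    show (1 / 2 : ℂ) * (D (uu n j) - Complex.I * D (vv n j)) *
        ((1 / 2 : ℂ) * (D (uu n j) + Complex.I * D (vv n j))) = _
    rw [ha, hb]
    simp only []
    ring_nf
    rw [Complex.I_sq]
    ring
  set T := ∑ j : Fin n, (a j ^ 2 + b j ^ 2) with hT
  have hTre : T.re = ⟪Gr, Gr⟫ - ⟪Gi, Gi⟫ := by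
    rw [key Gr Gr, key Gi Gi, hT, Complex.re_sum]
    have h1 : ∀ v, ⟪uu n v, Gr⟫ = (a v).re := fun v => by
      rw [real_inner_comm]; exact hGr _
    have h2 : ∀ v, ⟪vv n v, Gr⟫ = (b v).re := fun v => by
      rw [real_inner_comm]; exact hGr _
    have h3 : ∀ v, ⟪uu n v, Gi⟫ = (a v).im := fun v => by
      rw [real_inner_comm]; exact hGi _
    have h4 : ∀ v, ⟪vv n v, Gi⟫ = (b v).im := fun v => by
      rw [real_inner_comm]; exact hGi _
    simp only [hGr, hGi, h1, h2, h3, h4, Complex.add_re, pow_two, Complex.mul_re]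
    rw [← Finset.sum_add_distrib, ← Finset.sum_add_distrib, ← Finset.sum_sub_distrib]
    exact Finset.sum_congr rfl fun j _ => by ring
  have hTim : T.im = 2 * ⟪Gr, Gi⟫ := by
    rw [key Gr Gi, hT, Complex.im_sum]
    have h3 : ∀ v, ⟪uu n v, Gi⟫ = (a v).im := fun v => by
      rw [real_inner_comm]; exact hGi _
    have h4 : ∀ v, ⟪vv n v, Gi⟫ = (b v).im := fun v => by
      rw [real_inner_comm]; exact hGi _
    simp only [hGr, hGi, h3, h4, Complex.add_im, pow_two, Complex.mul_im]
    rw [mul_add, Finset.mul_sum, Finset.mul_sum, ← Finset.sum_add_distrib]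
    exact Finset.sum_congr rfl fun j _ => by ring
  rw [hsum]
  constructor
  · rintro ⟨h0, hn⟩
    have hT0 : T = 0 := by
      apply Complex.ext
      · rw [hTre, Complex.zero_re, real_inner_self_eq_norm_sq, real_inner_self_eq_norm_sq, hn]
        ring
      · rw [hTim, Complex.zero_im, h0]; ring
    rw [hT0, mul_zero]
  · intro h
    have hT0 : T = 0 := by
      have : (4 : ℂ) * ((1/4 : ℂ) * T) = 0 := by rw [h, mul_zero]
      field_simp at this
      exact this
    have h1 : T.re = 0 := by rw [hT0]; rfl
    have h2 : T.im = 0 := by rw [hT0]; rfl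
    rw [hTre] at h1
    rw [hTim] at h2
    constructor
    · linarith
    · have : ‖Gr‖^2 = ‖Gi‖^2 := by
        rw [← real_inner_self_eq_norm_sq, ← real_inner_self_eq_norm_sq]; linarith
      exact pow_left_inj₀ (norm_nonneg _) (norm_nonneg _) two_ne_zero |>.mp this

lemma prod_fderiv {f g : CSpace n → ℂ} (hf : Differentiable ℝ f) (hg : Differentiable ℝ g)
    (w v : CSpace n) :
    fderiv ℝ (fun w => f w * (starRingEnd ℂ) (g w)) w v
      = f w * (starRingEnd ℂ) (fderiv ℝ g w v) + (starRingEnd ℂ) (g w) * fderiv ℝ f w v := by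
  have hconj : HasFDerivAt (fun w => (starRingEnd ℂ) (g w))
      ((Complex.conjCLE.toContinuousLinearMap).comp (fderiv ℝ g w)) w :=
    Complex.conjCLE.toContinuousLinearMap.hasFDerivAt.comp w (hg w).hasFDerivAt
  have h := ((hf w).hasFDerivAt.mul hconj).fderiv
  rw [show (fun w => f w * (starRingEnd ℂ) (g w)) = f * fun w => (starRingEnd ℂ) (g w) from rfl, h]
  simp only [ContinuousLinearMap.add_apply, ContinuousLinearMap.smul_apply,
    ContinuousLinearMap.coe_comp', Function.comp_apply, smul_eq_mul,
    ContinuousLinearEquiv.coe_coe]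
  simp only [Complex.conjCLE_apply]

lemma wdz_mul {f g : CSpace n → ℂ} (hf : Differentiable ℝ f) (hg : Differentiable ℝ g)
    (hghol : ∀ w j, wdzbar g w j = 0) (w : CSpace n) (j : Fin n) :
    wdz (fun w => f w * (starRingEnd ℂ) (g w)) w j = (starRingEnd ℂ) (g w) * wdz f w j := by
  have h : (1/2 : ℂ) * (fderiv ℝ g w (uu n j) + Complex.I * fderiv ℝ g w (vv n j)) = 0 :=
    hghol w j
  have hdu : fderiv ℝ g w (uu n j) = -Complex.I * fderiv ℝ g w (vv n j) := by
    linear_combination 2 * h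
  have hconj : (starRingEnd ℂ) (fderiv ℝ g w (uu n j))
      = Complex.I * (starRingEnd ℂ) (fderiv ℝ g w (vv n j)) := by
    rw [hdu, map_mul, map_neg, Complex.conj_I]; ring
  show (1/2 : ℂ) * (fderiv ℝ (fun w => f w * (starRingEnd ℂ) (g w)) w (uu n j)
      - Complex.I * fderiv ℝ (fun w => f w * (starRingEnd ℂ) (g w)) w (vv n j)) = _
  rw [prod_fderiv hf hg w (uu n j), prod_fderiv hf hg w (vv n j), hconj]
  show _ = (starRingEnd ℂ) (g w) *
    ((1/2 : ℂ) * (fderiv ℝ f w (uu n j) - Complex.I * fderiv ℝ f w (vv n j)))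
  ring

lemma wdzbar_mul {f g : CSpace n → ℂ} (hf : Differentiable ℝ f) (hg : Differentiable ℝ g)
    (hfhol : ∀ w j, wdzbar f w j = 0) (w : CSpace n) (j : Fin n) :
    wdzbar (fun w => f w * (starRingEnd ℂ) (g w)) w j
      = f w * (starRingEnd ℂ) (wdz g w j) := by
  have h : (1/2 : ℂ) * (fderiv ℝ f w (uu n j) + Complex.I * fderiv ℝ f w (vv n j)) = 0 :=
    hfhol w j
  have hau : fderiv ℝ f w (uu n j) = -Complex.I * fderiv ℝ f w (vv n j) := by
    linear_combination 2 * h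
  show (1/2 : ℂ) * (fderiv ℝ (fun w => f w * (starRingEnd ℂ) (g w)) w (uu n j)
      + Complex.I * fderiv ℝ (fun w => f w * (starRingEnd ℂ) (g w)) w (vv n j)) = _
  rw [prod_fderiv hf hg w (uu n j), prod_fderiv hf hg w (vv n j), hau]
  show _ = f w * (starRingEnd ℂ)
    ((1/2 : ℂ) * (fderiv ℝ g w (uu n j) - Complex.I * fderiv ℝ g w (vv n j)))
  rw [map_mul, map_sub, map_mul, Complex.conj_I]
  rw [map_div₀, map_one, map_ofNat]
  ring

def Lline (n : ℕ) (j : Fin n) : ℂ →L[ℝ] CSpace n :=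
  (Complex.reCLM.smulRight (uu n j)) + (Complex.imCLM.smulRight (vv n j))

lemma Lline_apply (j : Fin n) (t : ℂ) :
    Lline n j t = t.re • uu n j + t.im • vv n j := rfl

lemma hasDerivAt_line {f : CSpace n → ℂ} (hf : Differentiable ℝ f)
    (hfhol : ∀ w j, wdzbar f w j = 0) (w : CSpace n) (j : Fin n) (t₀ : ℂ) :
    HasDerivAt (fun t : ℂ => f (w + Lline n j t)) (wdz f (w + Lline n j t₀) j) t₀ := by
  set p := w + Lline n j t₀ with hp
  set D := fderiv ℝ f p with hD
  have hline : HasFDerivAt (fun t : ℂ => w + Lline n j t) (Lline n j) t₀ :=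
    (Lline n j).hasFDerivAt.const_add w
  have hcomp : HasFDerivAt (fun t : ℂ => f (w + Lline n j t)) (D.comp (Lline n j)) t₀ :=
    (hf p).hasFDerivAt.comp t₀ hline
  have hcr : D (uu n j) + Complex.I * D (vv n j) = 0 := by
    have h : (1/2 : ℂ) * (D (uu n j) + Complex.I * D (vv n j)) = 0 := hfhol p j
    linear_combination 2 * h
  have hb : D (vv n j) = Complex.I * D (uu n j) := by
    have : D (uu n j) = -Complex.I * D (vv n j) := by linear_combination hcr
    rw [this]; simp [← mul_assoc, Complex.I_mul_I]
  have hc : wdz f p j = D (uu n j) := by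
    show (1/2 : ℂ) * (D (uu n j) - Complex.I * D (vv n j)) = D (uu n j)
    rw [hb, ← mul_assoc, Complex.I_mul_I]; ring
  rw [hasDerivAt_iff_hasFDerivAt]
  apply hasFDerivAt_of_restrictScalars (𝕜 := ℝ) hcomp
  apply ContinuousLinearMap.ext
  intro s
  show s • wdz f p j = D (Lline n j s)
  rw [Lline_apply, map_add, map_smul, map_smul, hc, hb]
  rw [smul_eq_mul]
  simp only [smul_eq_mul, Complex.real_smul]
  nth_rewrite 1 [← Complex.re_add_im s]
  ring

lemma continuous_wdz {f : CSpace n → ℂ} (hf : Differentiable ℝ f)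
    (hfhol : ∀ w j, wdzbar f w j = 0) (j : Fin n) :
    Continuous (fun w => wdz f w j) := by
  rw [continuous_iff_continuousAt]
  intro w₀
  set F : CSpace n → ℂ → ℂ := fun w t => f (w + Lline n j t) with hFdef
  have hderiv : ∀ w t₀, HasDerivAt (F w) (wdz f (w + Lline n j t₀) j) t₀ :=
    fun w t₀ => hasDerivAt_line hf hfhol w j t₀
  have hwdz : ∀ w, wdz f w j = deriv (F w) 0 := by
    intro w
    have h := (hderiv w 0).deriv
    rw [map_zero, add_zero] at h
    exact h.symm
  have hjoint : Continuous fun p : CSpace n × ℂ => F p.1 p.2 :=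
    hf.continuous.comp (continuous_fst.add ((Lline n j).continuous.comp continuous_snd))
  set K := Metric.closedBall (0:ℂ) 2 with hKdef
  haveI : CompactSpace K := isCompact_iff_compactSpace.mp (isCompact_closedBall _ _)
  have hGj : Continuous fun p : CSpace n × K => F p.1 (p.2 : ℂ) :=
    hjoint.comp (continuous_fst.prodMk (continuous_subtype_val.comp continuous_snd))
  have htu : TendstoUniformly (fun w (t : K) => F w (t : ℂ))
      (fun t : K => F w₀ (t : ℂ)) (𝓝 w₀) :=
    Continuous.tendstoUniformly _ hGj w₀
  have htuo : TendstoUniformlyOn F (F w₀) (𝓝 w₀) K :=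
    (tendstoUniformlyOn_iff_tendstoUniformly_comp_coe).mpr htu
  have htlu : TendstoLocallyUniformlyOn F (F w₀) (𝓝 w₀) (Metric.ball (0:ℂ) 2) :=
    htuo.tendstoLocallyUniformlyOn.mono Metric.ball_subset_closedBall
  have hdiffOn : ∀ᶠ w in 𝓝 w₀, DifferentiableOn ℂ (F w) (Metric.ball (0:ℂ) 2) :=
    Filter.Eventually.of_forall fun w t _ =>
      (hderiv w t).differentiableAt.differentiableWithinAt
  have hd := htlu.deriv hdiffOn Metric.isOpen_ball
  have ht := hd.tendsto_at (Metric.mem_ball_self (by norm_num : (0:ℝ) < 2))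
  have heq : (fun w => wdz f w j) = fun w => deriv (F w) 0 := funext hwdz
  rw [ContinuousAt, heq]
  simpa [hwdz w₀] using ht

lemma wdz_zero_of_locally_zero {q : CSpace n → ℂ} {c : CSpace n} {r : ℝ} (hr : 0 < r)
    (h : ∀ w ∈ Metric.ball c r, q w = 0) (j : Fin n) : wdz q c j = 0 := by
  have hev : q =ᶠ[𝓝 c] fun _ => (0:ℂ) := by
    filter_upwards [Metric.ball_mem_nhds c hr] with w hw using h w hw
  have hfd : fderiv ℝ q c = 0 := by
    rw [hev.fderiv_eq]; exact fderiv_const_apply 0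
  show (1/2:ℂ) * (fderiv ℝ q c (uu n j) - Complex.I * fderiv ℝ q c (vv n j)) = 0
  rw [hfd]; simp

lemma sum_identity {f g : CSpace n → ℂ} (hf : Differentiable ℝ f) (hg : Differentiable ℝ g)
    (hfhol : ∀ w j, wdzbar f w j = 0) (hghol : ∀ w j, wdzbar g w j = 0) (w : CSpace n) :
    ∑ j : Fin n, wdz (fun w => f w * (starRingEnd ℂ) (g w)) w j *
      wdzbar (fun w => f w * (starRingEnd ℂ) (g w)) w j
    = f w * (starRingEnd ℂ) (g w) * ∑ j : Fin n, wdz f w j * (starRingEnd ℂ) (wdz g w j) := by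
  rw [Finset.mul_sum]
  refine Finset.sum_congr rfl fun j _ => ?_
  rw [wdz_mul hf hg hghol w j, wdzbar_mul hf hg hfhol w j]
  ring

lemma vanish {f g : CSpace n → ℂ} (hf : Differentiable ℝ f) (hg : Differentiable ℝ g)
    (hfhol : ∀ w j, wdzbar f w j = 0) (hghol : ∀ w j, wdzbar g w j = 0)
    (hS : ∀ w, f w * (starRingEnd ℂ) (g w) *
      (∑ j : Fin n, wdz f w j * (starRingEnd ℂ) (wdz g w j)) = 0) (w₀ : CSpace n) :
    ∑ j : Fin n, wdz f w₀ j * (starRingEnd ℂ) (wdz g w₀ j) = 0 := by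
  set S : CSpace n → ℂ := fun w => ∑ j : Fin n, wdz f w j * (starRingEnd ℂ) (wdz g w j)
    with hSdef
  have hScont : Continuous S := by
    apply continuous_finset_sum
    intro j _
    exact (continuous_wdz hf hfhol j).mul (continuous_star.comp (continuous_wdz hg hghol j))
  by_contra hne
  have hU : IsOpen {w | S w ≠ 0} := (isOpen_compl_singleton).preimage hScont
  obtain ⟨ε, hε, hball⟩ := Metric.isOpen_iff.mp hU w₀ hne
  -- on the ball, f w * conj (g w) = 0
  have hfg : ∀ w ∈ Metric.ball w₀ ε, f w = 0 ∨ g w = 0 := by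
    intro w hw
    have h1 := hS w
    have h2 : S w ≠ 0 := hball hw
    rcases mul_eq_zero.mp h1 with h3 | h3
    · rcases mul_eq_zero.mp h3 with h4 | h4
      · exact Or.inl h4
      · exact Or.inr (star_eq_zero.mp h4)
    · exact absurd h3 h2
  by_cases hcase : ∃ w₁ ∈ Metric.ball w₀ ε, f w₁ ≠ 0
  · obtain ⟨w₁, hw₁, hfw₁⟩ := hcase
    have hV : IsOpen (Metric.ball w₀ ε ∩ {w | f w ≠ 0}) :=
      Metric.isOpen_ball.inter ((isOpen_compl_singleton).preimage hf.continuous)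
    obtain ⟨δ, hδ, hsub⟩ := Metric.isOpen_iff.mp hV w₁ ⟨hw₁, hfw₁⟩
    have hg0 : ∀ w ∈ Metric.ball w₁ δ, g w = 0 := by
      intro w hw
      rcases hfg w (hsub hw).1 with h | h
      · exact absurd h (hsub hw).2
      · exact h
    have hwdzg : ∀ j, wdz g w₁ j = 0 := fun j => wdz_zero_of_locally_zero hδ hg0 j
    have : S w₁ = 0 := by
      rw [hSdef]
      simp only []
      exact Finset.sum_eq_zero fun j _ => by rw [hwdzg j, map_zero, mul_zero]
    exact hball hw₁ this
  · push_neg at hcase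
    have hwdzf : ∀ j, wdz f w₀ j = 0 := fun j => wdz_zero_of_locally_zero hε hcase j
    apply hne
    exact Finset.sum_eq_zero fun j _ => by rw [hwdzf j, zero_mul]

end FgbarAux

/-- `f` is horizontally weakly conformal: at every point, the real gradients of `Re f`
and `Im f` are orthogonal and have equal norms. -/
def IsHWC {n : ℕ} (f : CSpace n → ℂ) : Prop :=
  ∀ w : CSpace n,
    ⟪gradient (fun w => (f w).re) w, gradient (fun w => (f w).im) w⟫ = 0 ∧
    ‖gradient (fun w => (f w).re) w‖ = ‖gradient (fun w => (f w).im) w‖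

/-- For holomorphic (polynomial) functions `f, g : ℂ^n → ℂ`, the mixed function
`F = f·conj(g)`, viewed as a real map `ℝ^{2n} → ℝ²`, is horizontally weakly conformal iff
`⟨conj(df), conj(dg)⟩_ℂ = ∑_j (∂f/∂z_j)·conj(∂g/∂z_j) = 0` identically. -/
theorem fgbar_hwc_iff {n : ℕ} (f g : CSpace n → ℂ)
    (hf : Differentiable ℝ f) (hg : Differentiable ℝ g)
    (hfhol : ∀ w j, wdzbar f w j = 0) (hghol : ∀ w j, wdzbar g w j = 0) :
    IsHWC (fun w => f w * conj (g w)) ↔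
      ∀ w : CSpace n, ∑ j : Fin n, wdz f w j * conj (wdz g w j) = 0 := by
  have hconjg : Differentiable ℝ fun w => (starRingEnd ℂ) (g w) :=
    Complex.conjCLE.toContinuousLinearMap.differentiable.comp hg
  have hF : Differentiable ℝ fun w => f w * (starRingEnd ℂ) (g w) := hf.mul hconjg
  constructor
  · intro hH
    apply FgbarAux.vanish hf hg hfhol hghol
    intro w
    rw [← FgbarAux.sum_identity hf hg hfhol hghol w]
    exact (FgbarAux.hwc_point_iff _ hF w).mp (hH w)
  · intro hS w
    apply (FgbarAux.hwc_point_iff _ hF w).mpr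
    rw [FgbarAux.sum_identity hf hg hfhol hghol w, hS w, mul_zero]
end
end

section
/- If (G₁,G₂):ℝ^{2m}→ℝ² and (G₃,G₄):ℝ^{2n}→ℝ² are horizontally weakly conformal maps in separable variables (the first depending only on the first 2m coordinates and the second only on the last 2n coordinates of ℝ^{2m+2n}), then (G₁G₃−G₂G₄, G₁G₄+G₂G₃):ℝ^{2(m+n)}→ℝ² is horizontally weakly conformal. -/
open scoped RealInnerProductSpace

noncomputable section

/-- A pair `(H₁, H₂)` of real functions is horizontally weakly conformal if at every point
`⟨∇H₁, ∇H₂⟩ = 0` and `‖∇H₁‖ = ‖∇H₂‖`. -/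
def IsHWCPair {E : Type*} [NormedAddCommGroup E] [InnerProductSpace ℝ E] [CompleteSpace E]
    (H₁ H₂ : E → ℝ) : Prop :=
  ∀ x : E, ⟪gradient H₁ x, gradient H₂ x⟫ = 0 ∧
    ‖gradient H₁ x‖ = ‖gradient H₂ x‖

section Aux

variable {E F : Type*} [NormedAddCommGroup E] [InnerProductSpace ℝ E] [CompleteSpace E]
  [NormedAddCommGroup F] [InnerProductSpace ℝ F] [CompleteSpace F]

open InnerProductSpace

/-- Gradient of a separable product `A(z.1) * B(z.2)` on `WithLp 2 (E × F)`. -/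
lemma hasGradientAt_sep_mul (A : E → ℝ) (B : F → ℝ) (u : E) (v : F)
    (z : WithLp 2 (E × F)) (hA : HasGradientAt A u z.ofLp.1) (hB : HasGradientAt B v z.ofLp.2) :
    HasGradientAt (fun w : WithLp 2 (E × F) => A w.ofLp.1 * B w.ofLp.2)
      ((WithLp.equiv 2 (E × F)).symm (B z.ofLp.2 • u, A z.ofLp.1 • v)) z := by
  rw [hasGradientAt_iff_hasFDerivAt]
  set e := WithLp.prodContinuousLinearEquiv 2 ℝ E F
  have p₁ : WithLp 2 (E × F) →L[ℝ] E :=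
    (ContinuousLinearMap.fst ℝ E F).comp e.toContinuousLinearMap
  have hA' : HasFDerivAt (fun w : WithLp 2 (E × F) => A w.ofLp.1)
      ((toDual ℝ E u).comp ((ContinuousLinearMap.fst ℝ E F).comp e.toContinuousLinearMap)) z :=
    hA.hasFDerivAt.comp z
      (((ContinuousLinearMap.fst ℝ E F).comp e.toContinuousLinearMap).hasFDerivAt)
  have hB' : HasFDerivAt (fun w : WithLp 2 (E × F) => B w.ofLp.2)
      ((toDual ℝ F v).comp ((ContinuousLinearMap.snd ℝ E F).comp e.toContinuousLinearMap)) z :=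
    hB.hasFDerivAt.comp z
      (((ContinuousLinearMap.snd ℝ E F).comp e.toContinuousLinearMap).hasFDerivAt)
  have h := hA'.mul hB'
  refine h.congr_fderiv ?_
  apply ContinuousLinearMap.ext
  intro w
  simp only [ContinuousLinearMap.add_apply, ContinuousLinearMap.smul_apply,
    ContinuousLinearMap.comp_apply, toDual_apply_apply]
  have : (⟪(WithLp.equiv 2 (E × F)).symm (B z.ofLp.2 • u, A z.ofLp.1 • v), w⟫ : ℝ)
      = ⟪B z.ofLp.2 • u, w.ofLp.1⟫ + ⟪A z.ofLp.1 • v, w.ofLp.2⟫ := rfl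
  rw [this]
  simp only [real_inner_smul_left]
  show A z.ofLp.1 * ⟪v, w.ofLp.2⟫ + B z.ofLp.2 * ⟪u, w.ofLp.1⟫
      = B z.ofLp.2 * ⟪u, w.ofLp.1⟫ + A z.ofLp.1 * ⟪v, w.ofLp.2⟫
  ring

lemma HasGradientAt.sub' {f g : E → ℝ} {u v : E} {x : E}
    (hf : HasGradientAt f u x) (hg : HasGradientAt g v x) :
    HasGradientAt (fun y => f y - g y) (u - v) x := by
  rw [hasGradientAt_iff_hasFDerivAt] at *
  rw [map_sub]; exact hf.sub hg

lemma HasGradientAt.add' {f g : E → ℝ} {u v : E} {x : E}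
    (hf : HasGradientAt f u x) (hg : HasGradientAt g v x) :
    HasGradientAt (fun y => f y + g y) (u + v) x := by
  rw [hasGradientAt_iff_hasFDerivAt] at *
  rw [map_add]; exact hf.add hg

end Aux

open InnerProductSpace

set_option maxHeartbeats 1000000 in
/-- If `(G₁,G₂) : ℝ^{2m} → ℝ²` and `(G₃,G₄) : ℝ^{2n} → ℝ²` are horizontally weakly
conformal maps in separable variables, then the complex product
`(G₁G₃ − G₂G₄, G₁G₄ + G₂G₃) : ℝ^{2(m+n)} → ℝ²` is horizontally weakly conformal. -/
theorem hwc_complex_product_separable {m n : ℕ}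
    (G₁ G₂ : EuclideanSpace ℝ (Fin (2 * m)) → ℝ)
    (G₃ G₄ : EuclideanSpace ℝ (Fin (2 * n)) → ℝ)
    (h₁ : ContDiff ℝ 1 G₁) (h₂ : ContDiff ℝ 1 G₂) (h₃ : ContDiff ℝ 1 G₃)
    (h₄ : ContDiff ℝ 1 G₄)
    (hwc12 : IsHWCPair G₁ G₂) (hwc34 : IsHWCPair G₃ G₄) :
    IsHWCPair
      (fun z : WithLp 2 (EuclideanSpace ℝ (Fin (2 * m)) × EuclideanSpace ℝ (Fin (2 * n))) =>
        G₁ z.ofLp.1 * G₃ z.ofLp.2 - G₂ z.ofLp.1 * G₄ z.ofLp.2)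
      (fun z : WithLp 2 (EuclideanSpace ℝ (Fin (2 * m)) × EuclideanSpace ℝ (Fin (2 * n))) =>
        G₁ z.ofLp.1 * G₄ z.ofLp.2 + G₂ z.ofLp.1 * G₃ z.ofLp.2) := by
  intro z
  have hg₁ : HasGradientAt G₁ (gradient G₁ z.ofLp.1) z.ofLp.1 :=
    ((h₁.differentiable one_ne_zero) z.ofLp.1).hasGradientAt
  have hg₂ : HasGradientAt G₂ (gradient G₂ z.ofLp.1) z.ofLp.1 :=
    ((h₂.differentiable one_ne_zero) z.ofLp.1).hasGradientAt
  have hg₃ : HasGradientAt G₃ (gradient G₃ z.ofLp.2) z.ofLp.2 :=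
    ((h₃.differentiable one_ne_zero) z.ofLp.2).hasGradientAt
  have hg₄ : HasGradientAt G₄ (gradient G₄ z.ofLp.2) z.ofLp.2 :=
    ((h₄.differentiable one_ne_zero) z.ofLp.2).hasGradientAt
  have h13 := hasGradientAt_sep_mul G₁ G₃ _ _ z hg₁ hg₃
  have h24 := hasGradientAt_sep_mul G₂ G₄ _ _ z hg₂ hg₄
  have h14 := hasGradientAt_sep_mul G₁ G₄ _ _ z hg₁ hg₄
  have h23 := hasGradientAt_sep_mul G₂ G₃ _ _ z hg₂ hg₃
  have hH₁ := h13.sub' h24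
  have hH₂ := h14.add' h23
  rw [WithLp.equiv_symm_apply, ← WithLp.toLp_sub, Prod.mk_sub_mk, ← WithLp.equiv_symm_apply] at hH₁
  rw [WithLp.equiv_symm_apply, ← WithLp.toLp_add, Prod.mk_add_mk, ← WithLp.equiv_symm_apply] at hH₂
  rw [hH₁.gradient, hH₂.gradient]
  set u₁ := gradient G₁ z.ofLp.1
  set u₂ := gradient G₂ z.ofLp.1
  set u₃ := gradient G₃ z.ofLp.2
  set u₄ := gradient G₄ z.ofLp.2
  set a := G₁ z.ofLp.1
  set b := G₂ z.ofLp.1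
  set c := G₃ z.ofLp.2
  set d := G₄ z.ofLp.2
  have hinner12 : (⟪u₁, u₂⟫ : ℝ) = 0 := (hwc12 z.ofLp.1).1
  have hinner34 : (⟪u₃, u₄⟫ : ℝ) = 0 := (hwc34 z.ofLp.2).1
  have hinner21 : (⟪u₂, u₁⟫ : ℝ) = 0 := by rw [real_inner_comm]; exact hinner12
  have hinner43 : (⟪u₄, u₃⟫ : ℝ) = 0 := by rw [real_inner_comm]; exact hinner34
  have hn12 : (⟪u₁, u₁⟫ : ℝ) = ⟪u₂, u₂⟫ := by
    rw [real_inner_self_eq_norm_sq, real_inner_self_eq_norm_sq, (hwc12 z.ofLp.1).2]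
  have hn34 : (⟪u₃, u₃⟫ : ℝ) = ⟪u₄, u₄⟫ := by
    rw [real_inner_self_eq_norm_sq, real_inner_self_eq_norm_sq, (hwc34 z.ofLp.2).2]
  constructor
  · rw [WithLp.prod_inner_apply, WithLp.equiv_symm_apply, WithLp.ofLp_toLp,
      WithLp.ofLp_toLp]
    simp only [inner_sub_left, inner_add_right, real_inner_smul_left, real_inner_smul_right]
    rw [hinner12, hinner34, hinner21, hinner43, hn12, hn34]
    ring
  · have hsq : ∀ w : WithLp 2 (EuclideanSpace ℝ (Fin (2 * m)) × EuclideanSpace ℝ (Fin (2 * n))),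
        ‖w‖ ^ 2 = (⟪w, w⟫ : ℝ) := fun w => (real_inner_self_eq_norm_sq w).symm
    have key : ‖(WithLp.equiv 2 (_ × _)).symm (c • u₁ - d • u₂, a • u₃ - b • u₄)‖ ^ 2
        = ‖(WithLp.equiv 2 (_ × _)).symm (d • u₁ + c • u₂, a • u₄ + b • u₃)‖ ^ 2 := by
      rw [hsq, hsq, WithLp.prod_inner_apply, WithLp.prod_inner_apply,
        WithLp.equiv_symm_apply, WithLp.ofLp_toLp, WithLp.ofLp_toLp]
      simp only [inner_sub_left, inner_sub_right, inner_add_left, inner_add_right,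
        real_inner_smul_left, real_inner_smul_right]
      rw [hinner12, hinner34, hinner21, hinner43, hn12, hn34]
      ring
    nlinarith [norm_nonneg ((WithLp.equiv 2
        (EuclideanSpace ℝ (Fin (2 * m)) × EuclideanSpace ℝ (Fin (2 * n)))).symm
        (c • u₁ - d • u₂, a • u₃ - b • u₄)),
      norm_nonneg ((WithLp.equiv 2
        (EuclideanSpace ℝ (Fin (2 * m)) × EuclideanSpace ℝ (Fin (2 * n)))).symm
        (d • u₁ + c • u₂, a • u₄ + b • u₃))]
end
end

section
/- The map G:ℝ³→ℝ² given by G(x,y,z)=(xy,z²) does NOT satisfy the Milnor condition (b) at the origin: in fact closure(M(G)∖V_G) ∩ V_G = V_G, where V_G={x=z=0}∪{y=z=0} and M(G)⊇{z=0}. -/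
noncomputable section

/-- The zero set `V_G` of `G(x,y,z) = (xy, z²)`: `{x = z = 0} ∪ {y = z = 0}`. -/
def VG : Set (EuclideanSpace ℝ (Fin 3)) :=
  {p | (p 0 = 0 ∧ p 2 = 0) ∨ (p 1 = 0 ∧ p 2 = 0)}

/-- The Milnor set `M(G)` of `G(x,y,z) = (xy, z²)`: the points where `(x,y,z)`,
`∇G₁ = (y,x,0)` and `∇G₂ = (0,0,2z)` are linearly dependent; it equals
`{x = ±y} ∪ {z = 0}`. -/
def MG : Set (EuclideanSpace ℝ (Fin 3)) :=
  {p | p 0 = p 1 ∨ p 0 = -(p 1) ∨ p 2 = 0}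

lemma evne (a : ℝ) : ∀ᶠ n : ℕ in Filter.atTop, a + 1 / ((n : ℝ) + 1) ≠ 0 := by
  rcases le_or_gt 0 a with h | h
  · filter_upwards with n
    have : (0 : ℝ) < 1 / ((n : ℝ) + 1) := by positivity
    nlinarith
  · have h2 : ∀ᶠ n : ℕ in Filter.atTop, 1 / ((n : ℝ) + 1) < -a :=
      tendsto_one_div_add_atTop_nhds_zero_nat.eventually_lt_const (by linarith)
    filter_upwards [h2] with n hn
    nlinarith

lemma mem_cl {p : EuclideanSpace ℝ (Fin 3)} (hp : p ∈ VG) : p ∈ closure (MG \ VG) := by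
  have hp2 : p 2 = 0 := hp.elim And.right And.right
  set v : EuclideanSpace ℝ (Fin 3) := (WithLp.equiv 2 _).symm ![1, 1, 0] with hv
  have hv0 : v 0 = 1 := rfl
  have hv1 : v 1 = 1 := rfl
  have hv2 : v 2 = 0 := rfl
  have htend : Filter.Tendsto (fun n : ℕ => p + (1 / ((n : ℝ) + 1)) • v)
      Filter.atTop (nhds p) := by
    have := ((tendsto_one_div_add_atTop_nhds_zero_nat (𝕜 := ℝ)).smul_const v).const_add p
    simpa using this
  refine mem_closure_of_tendsto htend ?_
  filter_upwards [evne (p 0), evne (p 1)] with n h0 h1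
  have hx : (p + (1 / ((n : ℝ) + 1)) • v) 0 = p 0 + 1 / ((n : ℝ) + 1) := by
    simp [PiLp.add_apply, PiLp.smul_apply, hv0]
  have hy : (p + (1 / ((n : ℝ) + 1)) • v) 1 = p 1 + 1 / ((n : ℝ) + 1) := by
    simp [PiLp.add_apply, PiLp.smul_apply, hv1]
  have hz : (p + (1 / ((n : ℝ) + 1)) • v) 2 = 0 := by
    simp [PiLp.add_apply, PiLp.smul_apply, hv2, hp2]
  constructor
  · exact Or.inr (Or.inr hz)
  · intro hmem
    rcases hmem with ⟨ha, _⟩ | ⟨ha, _⟩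
    · rw [hx] at ha; exact h0 ha
    · rw [hy] at ha; exact h1 ha

/-- `G(x,y,z) = (xy, z²)` fails the Milnor condition (b) at the origin; in fact
`closure (M(G) ∖ V_G) ∩ V_G = V_G`. -/
theorem milnor_condition_b_fails_xy_z2 :
    closure (MG \ VG) ∩ VG = VG ∧
    ¬ (closure (MG \ VG) ∩ VG ⊆ {(0 : EuclideanSpace ℝ (Fin 3))}) := by
  have hcl : closure (MG \ VG) ∩ VG = VG := by
    apply Set.eq_of_subset_of_subset (Set.inter_subset_right)
    intro p hp
    exact ⟨mem_cl hp, hp⟩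
  refine ⟨hcl, ?_⟩
  intro h
  set q : EuclideanSpace ℝ (Fin 3) := EuclideanSpace.single 1 (1 : ℝ) with hq
  have hqV : q ∈ VG := by
    left
    constructor <;> simp [hq, EuclideanSpace.single_apply]
  have := h (hcl ▸ hqV)
  have hq1 : q 1 = 1 := by simp [hq, EuclideanSpace.single_apply]
  rw [Set.mem_singleton_iff] at this
  rw [this] at hq1
  simp at hq1
end
end
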